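/- Let (p, m0, m1) be a Markov triple with m0 ≤ m1 and define m_{n+2} = 3*p*m_{n+1} - m_n for n ≥ 0. Then m_n > 0 for all n, the sequence (m_n) is nondecreasing, and the ratios m_{n+1}/(p*m_n) converge, as n → ∞, to sigma_p = (1/2)*(3 + sqrt(9 - 4/p^2)). -/

import Mathlib

/-- A Markov triple: positive integers satisfying the Markov equation. -/
def IsMarkovTriple (p1 p2 p3 : ℤ) : Prop :=
  0 < p1 ∧ 0 < p2 ∧ 0 < p3 ∧ p1 ^ 2 + p2 ^ 2 + p3 ^ 2 = 3 * p1 * p2 * p3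

/-- For a Markov triple `(p, m 0, m 1)` with `m 0 ≤ m 1` and the recursion
`m (n+2) = 3*p*m (n+1) - m n`, all `m n` are positive, the sequence is nondecreasing,
and the ratios `m (n+1)/(p * m n)` converge to `σ_p = (1/2)*(3 + √(9 - 4/p^2))`. -/
theorem markov_ratios_tendsto_sigma (p : ℤ) (m : ℕ → ℤ)
    (h : IsMarkovTriple p (m 0) (m 1)) (h01 : m 0 ≤ m 1)
    (hrec : ∀ n : ℕ, m (n + 2) = 3 * p * m (n + 1) - m n) :
    (∀ n : ℕ, 0 < m n) ∧ Monotone m ∧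
    Filter.Tendsto (fun n : ℕ => (m (n + 1) : ℝ) / ((p : ℝ) * (m n : ℝ)))
      Filter.atTop
      (nhds ((1 / 2) * (3 + Real.sqrt (9 - 4 / (p : ℝ) ^ 2)))) := by
  obtain ⟨hp, h0, h1, heq⟩ := h
  -- positivity and one-step monotonicity
  have key : ∀ n, 0 < m n ∧ 0 < m (n + 1) ∧ m n ≤ m (n + 1) := by
    intro n
    induction n with
    | zero => exact ⟨h0, h1, h01⟩
    | succ k ih =>
      obtain ⟨hk, hk1, hle⟩ := ih
      have h2 : 2 * m (k + 1) ≤ m (k + 2) := by rw [hrec k]; nlinarith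
      exact ⟨hk1, by linarith, by linarith⟩
  have hpos : ∀ n, 0 < m n := fun n => (key n).1
  have hmono : Monotone m := monotone_nat_of_le_succ (fun n => (key n).2.2)
  have h2 : ∀ n, 2 * m (n + 1) ≤ m (n + 2) := by
    intro n
    have := key n
    rw [hrec n]; nlinarith [this.1, this.2.1, this.2.2]
  -- growth
  have hgrow : ∀ n : ℕ, (n : ℤ) ≤ m n := by
    intro n
    induction n with
    | zero => exact_mod_cast (hpos 0).le
    | succ k ih =>
      rcases k with _ | j
      · simpa using Int.add_one_le_of_lt h1
      · have := h2 j
        have := hpos (j + 1)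
        push_cast
        push_cast at ih
        linarith
  -- invariant
  have hinv : ∀ n, m (n + 1) ^ 2 + m n ^ 2 - 3 * p * m n * m (n + 1) = -p ^ 2 := by
    intro n
    induction n with
    | zero => linarith
    | succ k ih =>
      rw [hrec k]
      linear_combination ih
  refine ⟨hpos, hmono, ?_⟩
  have hq : (0 : ℝ) < (p : ℝ) := by exact_mod_cast hp
  -- 4 / (m n)^2 → 0
  have hm : Filter.Tendsto (fun n : ℕ => ((m n : ℝ))) Filter.atTop Filter.atTop := by
    apply Filter.tendsto_atTop_mono (fun n => ?_) tendsto_natCast_atTop_atTop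
    exact_mod_cast hgrow n
  have hmsq : Filter.Tendsto (fun n : ℕ => ((m n : ℝ)) ^ 2) Filter.atTop Filter.atTop := by
    simpa [sq] using hm.atTop_mul_atTop₀ hm
  have hconv : Filter.Tendsto (fun n : ℕ => 4 / ((m n : ℝ)) ^ 2) Filter.atTop (nhds 0) := by
    simpa [div_eq_mul_inv] using hmsq.inv_tendsto_atTop.const_mul (4 : ℝ)
  have hcont : Continuous (fun x : ℝ => (1 / 2) * (3 + Real.sqrt (9 - 4 / (p : ℝ) ^ 2 - x))) := by
    continuity
  have htend : Filter.Tendsto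
      (fun n : ℕ => (1 / 2) * (3 + Real.sqrt (9 - 4 / (p : ℝ) ^ 2 - 4 / ((m n : ℝ)) ^ 2)))
      Filter.atTop (nhds ((1 / 2) * (3 + Real.sqrt (9 - 4 / (p : ℝ) ^ 2)))) := by
    have := (hcont.tendsto 0).comp hconv
    simpa [Function.comp_def] using this
  apply htend.congr'
  filter_upwards [Filter.eventually_ge_atTop 1] with n hn
  obtain ⟨k, rfl⟩ : ∃ k, n = k + 1 := ⟨n - 1, by omega⟩
  have ha : (0 : ℝ) < (m (k + 1) : ℝ) := by exact_mod_cast hpos (k + 1)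
  have hb : (0 : ℝ) < (m (k + 2) : ℝ) := by exact_mod_cast hpos (k + 2)
  have hinvR : (m (k + 2) : ℝ) ^ 2 + (m (k + 1) : ℝ) ^ 2
      - 3 * (p : ℝ) * (m (k + 1) : ℝ) * (m (k + 2) : ℝ) = -(p : ℝ) ^ 2 := by
    exact_mod_cast hinv (k + 1)
  have hbig : 3 * (p : ℝ) * (m (k + 1) : ℝ) ≤ 2 * (m (k + 2) : ℝ) := by
    have hZ : 3 * p * m (k + 1) ≤ 2 * m (k + 2) := by
      rw [hrec k]
      nlinarith [(key k).1, (key k).2.1, (key k).2.2, hp]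
    exact_mod_cast hZ
  have ht : 0 ≤ 2 * (m (k + 2) : ℝ) / ((p : ℝ) * (m (k + 1) : ℝ)) - 3 := by
    rw [sub_nonneg, le_div_iff₀ (by positivity)]
    linarith
  have hDsq : 9 - 4 / (p : ℝ) ^ 2 - 4 / ((m (k + 1) : ℝ)) ^ 2
      = (2 * (m (k + 2) : ℝ) / ((p : ℝ) * (m (k + 1) : ℝ)) - 3) ^ 2 := by
    field_simp
    linear_combination (-4 : ℝ) * hinvR
  rw [hDsq, Real.sqrt_sq ht]
  ring
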